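/- Let B be a left brace with B³ = 0. Then for every a ∈ B and every integer m (including negative m): aᵐ = m·a + (m(m−1)/2)·(a ∗ a), where aᵐ is the multiplicative power (using multiplicative inverses for negative m) and the right-hand side is additive. -/

import Mathlib

/-- A left brace: an abelian group `(B,+)` and a group `(B,·)` on the same set,
with common identity (`0 = 1`), satisfying `a·(b+c) = a·b − a + a·c`. -/
class LeftBrace (B : Type*) extends AddCommGroup B, Group B where
  zero_eq_one : (0 : B) = 1
  brace_distrib : ∀ a b c : B, a * (b + c) = a * b - a + a * c

/-- The star operation `a ∗ b = a·b − a − b`. -/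
def bstar {B : Type*} [LeftBrace B] (a b : B) : B := a * b - a - b

section Aux
variable {B : Type*} [LeftBrace B]

lemma brace_mul_eq (x y : B) : x * y = x + y + bstar x y := by
  unfold bstar; abel

lemma bstar_add (a x y : B) : bstar a (x + y) = bstar a x + bstar a y := by
  unfold bstar; rw [LeftBrace.brace_distrib]; abel

lemma bstar_zero (a : B) : bstar a 0 = 0 := by
  have h : a * (0 : B) = a := by rw [LeftBrace.zero_eq_one, mul_one]
  unfold bstar; rw [h]; abel

/-- `bstar a ·` as an additive monoid hom. -/
def bstarHom (a : B) : B →+ B where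
  toFun := fun x => bstar a x
  map_zero' := bstar_zero a
  map_add' := bstar_add a

lemma bstar_zsmul (a : B) (n : ℤ) (x : B) : bstar a (n • x) = n • bstar a x :=
  (bstarHom a).map_zsmul n x

lemma mul_form (hB3 : ∀ a b c : B, bstar a (bstar b c) = 0) (a : B) (m k : ℤ) :
    a * (m • a + k • bstar a a) = (m + 1) • a + (k + m) • bstar a a := by
  rw [brace_mul_eq, bstar_add, bstar_zsmul, bstar_zsmul, hB3, smul_zero]
  module

lemma inv_form (hB3 : ∀ a b c : B, bstar a (bstar b c) = 0) (a : B) :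
    a⁻¹ = -a + bstar a a := by
  have h := mul_form hB3 a (-1) 1
  have h2 : a * (-a + bstar a a) = 1 := by
    rw [← LeftBrace.zero_eq_one]
    have e1 : (-1 : ℤ) • a + (1 : ℤ) • bstar a a = -a + bstar a a := by module
    have e2 : ((-1 : ℤ) + 1) • a + ((1 : ℤ) + -1) • bstar a a = 0 := by module
    rw [e1, e2] at h
    exact h
  exact inv_eq_of_mul_eq_one_right h2

lemma bstar_inv_self (hB3 : ∀ a b c : B, bstar a (bstar b c) = 0) (a : B) :
    bstar a⁻¹ a = -(bstar a a) := by
  have h : bstar a⁻¹ a = 0 - a⁻¹ - a := by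
    unfold bstar; rw [inv_mul_cancel, ← LeftBrace.zero_eq_one]
  rw [h, inv_form hB3 a]; abel

lemma inv_mul_form (hB3 : ∀ a b c : B, bstar a (bstar b c) = 0) (a : B) (m k : ℤ) :
    a⁻¹ * (m • a + k • bstar a a) = (m - 1) • a + (k + 1 - m) • bstar a a := by
  rw [brace_mul_eq, bstar_add, bstar_zsmul, bstar_zsmul, bstar_inv_self hB3,
    hB3, smul_zero, inv_form hB3 a]
  module

end Aux

theorem stmt9 {B : Type*} [LeftBrace B]
    (hB3 : ∀ a b c : B, bstar a (bstar b c) = 0) (a : B) (m : ℤ) :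
    a ^ m = m • a + ((m * (m - 1)) / 2) • bstar a a := by
  have step_up : ∀ n : ℤ, a ^ n = n • a + ((n * (n - 1)) / 2) • bstar a a →
      a ^ (n + 1) = (n + 1) • a + (((n + 1) * ((n + 1) - 1)) / 2) • bstar a a := by
    intro n h
    rw [show n + 1 = 1 + n by ring, zpow_add, zpow_one, h, mul_form hB3,
      show (1 + n) * (1 + n - 1) = n * (n - 1) + n * 2 by ring,
      Int.add_mul_ediv_right _ _ (by norm_num : (2 : ℤ) ≠ 0),
      show 1 + n = n + 1 by ring]
  have step_down : ∀ n : ℤ, a ^ n = n • a + ((n * (n - 1)) / 2) • bstar a a →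
      a ^ (n - 1) = (n - 1) • a + (((n - 1) * ((n - 1) - 1)) / 2) • bstar a a := by
    intro n h
    have hk : ((n - 1) * ((n - 1) - 1)) / 2 = (n * (n - 1)) / 2 + (1 - n) := by
      have e : (n - 1) * ((n - 1) - 1) = n * (n - 1) + (1 - n) * 2 := by ring
      rw [e, Int.add_mul_ediv_right _ _ (by norm_num : (2 : ℤ) ≠ 0)]
    have hstep : a ^ (n - 1) = a⁻¹ * a ^ n := by
      rw [show n - 1 = -1 + n by ring, zpow_add, zpow_neg_one]
    rw [hstep, h, inv_mul_form hB3, hk]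
    module
  induction m using Int.induction_on with
  | zero => simp [zpow_zero, ← LeftBrace.zero_eq_one]
  | succ i ih => exact step_up i ih
  | pred i ih =>
    have := step_down (-(i : ℤ)) ih
    convert this using 2
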